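/- Let A be a subset of Δ^{m-1} × Δ^{n-1} and T a triangulation of A. Suppose T' results from T by a flip supported on a circuit X = (X^+, X^-), and σ ∈ T but σ ∉ T', with the bipartite graph G(σ) connected. Then σ contains a maximal simplex of T_X^+. -/

import Mathlib

open Finset

section Defs

variable {ι V : Type*} [AddCommGroup V] [Module ℝ V]

/-- `F` is a face of the cell `C` (w.r.t. the point map `p`): the set of points of `C`
minimizing some linear functional. -/
def IsFaceOf (p : ι → V) (C F : Finset ι) : Prop :=
  ∃ φ : V →ₗ[ℝ] ℝ, (↑F : Set ι) = {x | x ∈ C ∧ ∀ y ∈ C, φ (p x) ≤ φ (p y)}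

/-- `S` is a polyhedral subdivision of the point set `A` (w.r.t. the point map `p`). -/
def IsSubdivision (p : ι → V) (A : Finset ι) (S : Set (Finset ι)) : Prop :=
  (∀ C ∈ S, C ⊆ A) ∧
  (∀ C ∈ S, ∀ F : Finset ι, IsFaceOf p C F → F ∈ S) ∧
  (∀ C ∈ S, ∀ C' ∈ S, ∃ F : Finset ι, IsFaceOf p C F ∧ IsFaceOf p C' F ∧
    convexHull ℝ (p '' ↑C) ∩ convexHull ℝ (p '' ↑C') = convexHull ℝ (p '' ↑F)) ∧
  (⋃ C ∈ S, convexHull ℝ (p '' ↑C)) = convexHull ℝ (p '' ↑A)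

/-- A triangulation: a subdivision all of whose cells are affinely independent. -/
def IsTriangulation (p : ι → V) (A : Finset ι) (S : Set (Finset ι)) : Prop :=
  IsSubdivision p A S ∧ ∀ C ∈ S, AffineIndependent ℝ (fun x : ↥C => p ↑x)

/-- `X` is a circuit: affinely dependent, but every proper subset is affinely independent. -/
def IsCircuit (p : ι → V) (X : Finset ι) : Prop :=
  ¬ AffineIndependent ℝ (fun x : ↥X => p ↑x) ∧
  ∀ Y : Finset ι, Y ⊂ X → AffineIndependent ℝ (fun x : ↥Y => p ↑x)

/-- The triangulation `T_X^+` of a circuit `X` with dependence coefficients `w`: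
all subsets of `X` not containing `X⁺ = {x ∈ X : w x > 0}`. -/
def Tpos (X : Finset ι) (w : ι → ℝ) : Set (Finset ι) :=
  {σ | σ ⊆ X ∧ ∃ x ∈ X, 0 < w x ∧ x ∉ σ}

/-- The triangulation `T_X^-` of a circuit `X` with dependence coefficients `w`:
all subsets of `X` not containing `X⁻ = {x ∈ X : w x < 0}`. -/
def Tneg (X : Finset ι) (w : ι → ℝ) : Set (Finset ι) :=
  {σ | σ ⊆ X ∧ ∃ x ∈ X, w x < 0 ∧ x ∉ σ}

end Defs

section Flip

variable {ι : Type*} [DecidableEq ι]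

/-- `σ` is a maximal element (under inclusion) of the collection `S`. -/
def MaximalIn (S : Set (Finset ι)) (σ : Finset ι) : Prop :=
  σ ∈ S ∧ ∀ τ ∈ S, σ ⊆ τ → σ = τ

/-- The link of the cell `C` in the triangulation `T`. -/
def linkIn (T : Set (Finset ι)) (C : Finset ι) : Set (Finset ι) :=
  {C' | C' ∈ T ∧ C ∩ C' = ∅ ∧ C ∪ C' ∈ T}

/-- `T'` is the result of a flip on `T` supported on the circuit `X` (with dependence
coefficients `w`): `T_X^+ ⊆ T`, all maximal simplices of `T_X^+` have the same link `L`
in `T`, and `T'` is obtained by exchanging `T_X^+` for `T_X^-` relative to `L`. -/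
def IsFlip (T T' : Set (Finset ι)) (X : Finset ι) (w : ι → ℝ) : Prop :=
  Tpos X w ⊆ T ∧
  ∃ L : Set (Finset ι),
    (∀ σ : Finset ι, MaximalIn (Tpos X w) σ → linkIn T σ = L) ∧
    T' = T \ {τ | ∃ ρ ∈ L, ∃ σ ∈ Tpos X w, τ = ρ ∪ σ} ∪
         {τ | ∃ ρ ∈ L, ∃ σ ∈ Tneg X w, τ = ρ ∪ σ}

end Flip

/-- Embedding of the vertex set of `Δ^{m-1} × Δ^{n-1}` in `ℝ^m × ℝ^n`. -/
def emb (m n : ℕ) : Fin m × Fin n → (Fin m → ℝ) × (Fin n → ℝ) :=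
  fun q => (Pi.single q.1 1, Pi.single q.2 1)

/-- The bipartite subgraph `G(C)` of `K_{m,n}` with edge set corresponding to `C`. -/
def bip {m n : ℕ} (C : Finset (Fin m × Fin n)) : SimpleGraph (Fin m ⊕ Fin n) :=
  SimpleGraph.fromRel (fun a b =>
    match a, b with
    | Sum.inl i, Sum.inr j => (i, j) ∈ C
    | _, _ => False)


section AuxLemmas

open SimpleGraph

variable {m n : ℕ}

private lemma signs_of_sum_zero {α : Type*} {S : Finset α} {w : α → ℝ}
    (h : ∑ x ∈ S, w x = 0) {a : α} (ha : a ∈ S) (hwa : w a ≠ 0) :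
    (∃ b ∈ S, w b < 0) ∧ (∃ b ∈ S, 0 < w b) := by
  constructor
  · by_contra hb
    push_neg at hb
    have hpos : 0 < ∑ x ∈ S, w x :=
      Finset.sum_pos' hb ⟨a, ha, (hb a ha).lt_of_ne (Ne.symm hwa)⟩
    exact absurd h (ne_of_gt hpos)
  · by_contra hb
    push_neg at hb
    have hneg : 0 < ∑ x ∈ S, -w x := by
      refine Finset.sum_pos' (fun i hi => neg_nonneg.mpr (hb i hi)) ⟨a, ha, ?_⟩
      have := (hb a ha).lt_of_ne hwa
      linarith
    have h2 : ∑ x ∈ S, -w x = 0 := by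
      rw [Finset.sum_neg_distrib, h, neg_zero]
    exact absurd h2 (ne_of_gt hneg)

private lemma fiber_signs {X : Finset (Fin m × Fin n)} {w : Fin m × Fin n → ℝ}
    (hw0 : ∑ x ∈ X, w x • emb m n x = 0) (hw2 : ∀ x ∈ X, w x ≠ 0)
    {a : Fin m × Fin n} (ha : a ∈ X) :
    ((∃ b ∈ X, b.1 = a.1 ∧ w b < 0) ∧ (∃ b ∈ X, b.1 = a.1 ∧ 0 < w b)) ∧
    ((∃ b ∈ X, b.2 = a.2 ∧ w b < 0) ∧ (∃ b ∈ X, b.2 = a.2 ∧ 0 < w b)) := by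
  classical
  have h1 : ∑ x ∈ X, w x * (Pi.single x.1 1 : Fin m → ℝ) a.1 = 0 := by
    have h := congrArg (fun z : (Fin m → ℝ) × (Fin n → ℝ) => z.1 a.1) hw0
    simpa [emb, Prod.fst_sum, Finset.sum_apply, smul_eq_mul] using h
  have h2 : ∑ x ∈ X, w x * (Pi.single x.2 1 : Fin n → ℝ) a.2 = 0 := by
    have h := congrArg (fun z : (Fin m → ℝ) × (Fin n → ℝ) => z.2 a.2) hw0
    simpa [emb, Prod.snd_sum, Finset.sum_apply, smul_eq_mul] using h
  have hrow : ∑ x ∈ X.filter (fun x => x.1 = a.1), w x = 0 := by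
    rw [Finset.sum_filter]
    calc ∑ x ∈ X, (if x.1 = a.1 then w x else 0)
        = ∑ x ∈ X, w x * (Pi.single x.1 1 : Fin m → ℝ) a.1 := by
          refine Finset.sum_congr rfl fun x _ => ?_
          rcases eq_or_ne x.1 a.1 with hx | hx
          · rw [if_pos hx, hx, Pi.single_eq_same, mul_one]
          · rw [if_neg hx, Pi.single_eq_of_ne (Ne.symm hx), mul_zero]
      _ = 0 := h1
  have hcol : ∑ x ∈ X.filter (fun x => x.2 = a.2), w x = 0 := by
    rw [Finset.sum_filter]
    calc ∑ x ∈ X, (if x.2 = a.2 then w x else 0)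
        = ∑ x ∈ X, w x * (Pi.single x.2 1 : Fin n → ℝ) a.2 := by
          refine Finset.sum_congr rfl fun x _ => ?_
          rcases eq_or_ne x.2 a.2 with hx | hx
          · rw [if_pos hx, hx, Pi.single_eq_same, mul_one]
          · rw [if_neg hx, Pi.single_eq_of_ne (Ne.symm hx), mul_zero]
      _ = 0 := h2
  have haR : a ∈ X.filter (fun x => x.1 = a.1) := Finset.mem_filter.mpr ⟨ha, rfl⟩
  have haC : a ∈ X.filter (fun x => x.2 = a.2) := Finset.mem_filter.mpr ⟨ha, rfl⟩
  obtain ⟨⟨b1, hb1, hb1n⟩, ⟨b2, hb2, hb2p⟩⟩ := signs_of_sum_zero hrow haR (hw2 a ha)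
  obtain ⟨⟨b3, hb3, hb3n⟩, ⟨b4, hb4, hb4p⟩⟩ := signs_of_sum_zero hcol haC (hw2 a ha)
  obtain ⟨hb1X, hb1f⟩ := Finset.mem_filter.mp hb1
  obtain ⟨hb2X, hb2f⟩ := Finset.mem_filter.mp hb2
  obtain ⟨hb3X, hb3f⟩ := Finset.mem_filter.mp hb3
  obtain ⟨hb4X, hb4f⟩ := Finset.mem_filter.mp hb4
  exact ⟨⟨⟨b1, hb1X, hb1f, hb1n⟩, ⟨b2, hb2X, hb2f, hb2p⟩⟩,
    ⟨⟨b3, hb3X, hb3f, hb3n⟩, ⟨b4, hb4X, hb4f, hb4p⟩⟩⟩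

private lemma exists_second_pos {X : Finset (Fin m × Fin n)} {w : Fin m × Fin n → ℝ}
    (hw0 : ∑ x ∈ X, w x • emb m n x = 0) (hw2 : ∀ x ∈ X, w x ≠ 0)
    {a : Fin m × Fin n} (ha : a ∈ X) (hpa : 0 < w a) :
    ∃ d ∈ X, 0 < w d ∧ d ≠ a := by
  obtain ⟨-, ⟨⟨c, hcX, hc2, hcneg⟩, -⟩⟩ := fiber_signs hw0 hw2 ha
  obtain ⟨⟨-, ⟨d, hdX, hd1, hdpos⟩⟩, -⟩ := fiber_signs hw0 hw2 hcX
  refine ⟨d, hdX, hdpos, ?_⟩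
  rintro rfl
  have hca : c = d := Prod.ext hd1.symm hc2
  rw [hca] at hcneg
  linarith

private lemma maximalIn_tpos {ι : Type*} [DecidableEq ι] {X : Finset ι} {w : ι → ℝ} {x : ι}
    (hx : x ∈ X) (hpos : 0 < w x) : MaximalIn (Tpos X w) (X.erase x) := by
  constructor
  · exact ⟨Finset.erase_subset _ _, x, hx, hpos, Finset.notMem_erase _ _⟩
  · rintro τ ⟨hτX, y, hyX, hypos, hyτ⟩ hsub
    apply Finset.Subset.antisymm hsub
    intro t htτ
    rw [Finset.mem_erase]
    refine ⟨?_, hτX htτ⟩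
    rintro rfl
    have hXτ : X ⊆ τ := by
      intro z hz
      rcases eq_or_ne z t with rfl | hne
      · exact htτ
      · exact hsub (Finset.mem_erase.mpr ⟨hne, hz⟩)
    exact hyτ (hXτ hyX)

private lemma bip_adj_cases {C : Finset (Fin m × Fin n)} {a b : Fin m ⊕ Fin n}
    (h : (bip C).Adj a b) :
    ∃ x ∈ C, (a = Sum.inl x.1 ∧ b = Sum.inr x.2) ∨ (a = Sum.inr x.2 ∧ b = Sum.inl x.1) := by
  unfold bip at h
  rw [SimpleGraph.fromRel_adj] at h
  obtain ⟨-, h | h⟩ := h <;>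
    rcases a with i | j <;> rcases b with i' | j' <;>
      first
        | exact h.elim
        | exact ⟨(_, _), h, Or.inl ⟨rfl, rfl⟩⟩
        | exact ⟨(_, _), h, Or.inr ⟨rfl, rfl⟩⟩

private lemma bip_adj_of_mem {C : Finset (Fin m × Fin n)} {x : Fin m × Fin n}
    (hx : x ∈ C) : (bip C).Adj (Sum.inl x.1) (Sum.inr x.2) := by
  unfold bip
  rw [SimpleGraph.fromRel_adj]
  refine ⟨by simp, Or.inl ?_⟩
  show (x.1, x.2) ∈ C
  simpa using hx

private lemma bip_mem_of_adj {C : Finset (Fin m × Fin n)} {x : Fin m × Fin n}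
    (h : (bip C).Adj (Sum.inl x.1) (Sum.inr x.2)) : x ∈ C := by
  obtain ⟨y, hy, ⟨h1, h2⟩ | ⟨h1, -⟩⟩ := bip_adj_cases h
  · injection h1 with h1
    injection h2 with h2
    have : x = y := Prod.ext h1 h2
    rwa [this]
  · exact absurd h1 (by simp)

private lemma bip_le {C D : Finset (Fin m × Fin n)} (h : C ⊆ D) : bip C ≤ bip D := by
  intro a b hab
  obtain ⟨x, hx, ⟨h1, h2⟩ | ⟨h1, h2⟩⟩ := bip_adj_cases hab
  · rw [h1, h2]; exact bip_adj_of_mem (h hx)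
  · rw [h1, h2]; exact (bip_adj_of_mem (h hx)).symm

private noncomputable def dartCoef (x : Fin m × Fin n) (a b : Fin m ⊕ Fin n) : ℝ :=
  if a = Sum.inl x.1 ∧ b = Sum.inr x.2 then 1
  else if a = Sum.inr x.2 ∧ b = Sum.inl x.1 then -1 else 0

private noncomputable def phiAux : Fin m ⊕ Fin n → ((Fin m → ℝ) × (Fin n → ℝ)) × ℝ :=
  Sum.elim (fun i => ((Pi.single i 1, 0), 1/2)) (fun j => ((0, -Pi.single j 1), -1/2))

private lemma darts_sum_phi {α : Type*} {G : SimpleGraph α} {M : Type*} [AddCommGroup M]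
    (φ : α → M) {u v : α} (p : G.Walk u v) :
    (p.darts.map (fun d => φ d.fst - φ d.snd)).sum = φ u - φ v := by
  induction p with
  | nil => simp
  | @cons a b c' h q ih =>
    rw [SimpleGraph.Walk.darts_cons, List.map_cons, List.sum_cons, ih]
    show φ a - φ b + (φ b - φ c') = φ a - φ c'
    abel

private lemma sum_dartCoef_smul {C : Finset (Fin m × Fin n)} (d : (bip C).Dart) :
    ∑ x ∈ C, dartCoef x d.fst d.snd • ((emb m n x, (1:ℝ)) : ((Fin m → ℝ) × (Fin n → ℝ)) × ℝ)
      = phiAux d.fst - phiAux d.snd := by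
  classical
  obtain ⟨x₀, hx₀, h | h⟩ := bip_adj_cases d.adj
  · rw [h.1, h.2]
    have hz : ∀ b ∈ C, b ≠ x₀ →
        dartCoef b (Sum.inl x₀.1) (Sum.inr x₀.2) •
          ((emb m n b, (1:ℝ)) : ((Fin m → ℝ) × (Fin n → ℝ)) × ℝ) = 0 := by
      intro b _ hb
      have hc : dartCoef b (Sum.inl x₀.1) (Sum.inr x₀.2) = 0 := by
        unfold dartCoef
        rw [if_neg, if_neg]
        · rintro ⟨e1, -⟩; exact absurd e1 (by simp)
        · rintro ⟨e1, e2⟩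
          injection e1 with e1
          injection e2 with e2
          exact hb (Prod.ext e1 e2).symm
      rw [hc, zero_smul]
    rw [Finset.sum_eq_single_of_mem x₀ hx₀ hz]
    have hc : dartCoef x₀ (Sum.inl x₀.1) (Sum.inr x₀.2) = 1 := by
      unfold dartCoef
      rw [if_pos ⟨rfl, rfl⟩]
    rw [hc, one_smul]
    simp only [phiAux, Sum.elim_inl, Sum.elim_inr, emb, Prod.mk_sub_mk]
    norm_num
  · rw [h.1, h.2]
    have hz : ∀ b ∈ C, b ≠ x₀ →
        dartCoef b (Sum.inr x₀.2) (Sum.inl x₀.1) •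
          ((emb m n b, (1:ℝ)) : ((Fin m → ℝ) × (Fin n → ℝ)) × ℝ) = 0 := by
      intro b _ hb
      have hc : dartCoef b (Sum.inr x₀.2) (Sum.inl x₀.1) = 0 := by
        unfold dartCoef
        rw [if_neg, if_neg]
        · rintro ⟨e1, e2⟩
          injection e1 with e1
          injection e2 with e2
          exact hb (Prod.ext e2 e1).symm
        · rintro ⟨e1, -⟩; exact absurd e1 (by simp)
      rw [hc, zero_smul]
    rw [Finset.sum_eq_single_of_mem x₀ hx₀ hz]
    have hc : dartCoef x₀ (Sum.inr x₀.2) (Sum.inl x₀.1) = -1 := by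
      unfold dartCoef
      rw [if_neg, if_pos ⟨rfl, rfl⟩]
      rintro ⟨e1, -⟩; exact absurd e1 (by simp)
    rw [hc]
    simp only [phiAux, Sum.elim_inl, Sum.elim_inr, emb, Prod.mk_sub_mk]
    ext <;> simp <;> norm_num

private lemma bip_acyclic {C : Finset (Fin m × Fin n)}
    (hC : AffineIndependent ℝ (fun x : ↥C => emb m n ↑x)) : (bip C).IsAcyclic := by
  classical
  intro v c hc
  have hedm : (c.darts.map SimpleGraph.Dart.edge).Nodup := hc.isCircuit.isTrail.edges_nodup
  have hdnd : c.darts.Nodup := hedm.of_map _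
  set W : Fin m × Fin n → ℝ := fun x => ∑ d ∈ c.darts.toFinset, dartCoef x d.fst d.snd with hW
  have key : ∑ x ∈ C, W x • ((emb m n x, (1:ℝ)) : ((Fin m → ℝ) × (Fin n → ℝ)) × ℝ) = 0 := by
    calc ∑ x ∈ C, W x • ((emb m n x, (1:ℝ)) : ((Fin m → ℝ) × (Fin n → ℝ)) × ℝ)
        = ∑ x ∈ C, ∑ d ∈ c.darts.toFinset,
            dartCoef x d.fst d.snd • ((emb m n x, (1:ℝ)) : ((Fin m → ℝ) × (Fin n → ℝ)) × ℝ) := by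
          refine Finset.sum_congr rfl fun x _ => ?_
          rw [hW]
          exact Finset.sum_smul
      _ = ∑ d ∈ c.darts.toFinset, ∑ x ∈ C,
            dartCoef x d.fst d.snd • ((emb m n x, (1:ℝ)) : ((Fin m → ℝ) × (Fin n → ℝ)) × ℝ) :=
          Finset.sum_comm
      _ = ∑ d ∈ c.darts.toFinset, (phiAux d.fst - phiAux d.snd) :=
          Finset.sum_congr rfl fun d _ => sum_dartCoef_smul d
      _ = (c.darts.map (fun d => phiAux d.fst - phiAux d.snd)).sum :=
          List.sum_toFinset _ hdnd
      _ = phiAux v - phiAux v := darts_sum_phi phiAux c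
      _ = 0 := sub_self _
  have hsum : ∑ x ∈ C, W x = 0 := by
    have h := congrArg Prod.snd key
    simpa [Prod.snd_sum, smul_eq_mul] using h
  have hvec : ∑ x ∈ C, W x • emb m n x = 0 := by
    have h := congrArg Prod.fst key
    simpa [Prod.fst_sum] using h
  obtain ⟨d₀, hd₀⟩ : ∃ d, d ∈ c.darts := by
    cases c with
    | nil => exact absurd hc SimpleGraph.Walk.IsCycle.not_of_nil
    | cons h p => exact ⟨_, by rw [SimpleGraph.Walk.darts_cons]; exact List.mem_cons_self⟩
  have hd₀D : d₀ ∈ c.darts.toFinset := List.mem_toFinset.mpr hd₀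
  obtain ⟨x₀, hx₀C, hor⟩ := bip_adj_cases d₀.adj
  have hWx₀ : W x₀ ≠ 0 := by
    have hz : ∀ d ∈ c.darts.toFinset, d ≠ d₀ → dartCoef x₀ d.fst d.snd = 0 := by
      intro d hdD hdne
      by_contra hnz
      have hedge : d.edge = s(Sum.inl x₀.1, Sum.inr x₀.2) := by
        unfold dartCoef at hnz
        split_ifs at hnz with h1 h2
        · rw [show d.edge = s(d.fst, d.snd) from rfl, h1.1, h1.2]
        · rw [show d.edge = s(d.fst, d.snd) from rfl, h2.1, h2.2]
          exact Sym2.eq_swap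
        · exact absurd rfl hnz
      have hedge₀ : d₀.edge = s(Sum.inl x₀.1, Sum.inr x₀.2) := by
        rcases hor with h | h
        · rw [show d₀.edge = s(d₀.fst, d₀.snd) from rfl, h.1, h.2]
        · rw [show d₀.edge = s(d₀.fst, d₀.snd) from rfl, h.1, h.2]
          exact Sym2.eq_swap
      exact hdne (List.inj_on_of_nodup_map hedm (List.mem_toFinset.mp hdD) hd₀
        (hedge.trans hedge₀.symm))
    have hWeq : W x₀ = dartCoef x₀ d₀.fst d₀.snd := Finset.sum_eq_single_of_mem d₀ hd₀D hz
    rw [hWeq]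
    rcases hor with h | h
    · unfold dartCoef
      rw [if_pos ⟨h.1, h.2⟩]
      exact one_ne_zero
    · unfold dartCoef
      rw [if_neg, if_pos ⟨h.1, h.2⟩]
      · norm_num
      · rintro ⟨e1, -⟩
        rw [h.1] at e1
        exact absurd e1 (by simp)
  rw [affineIndependent_iff_of_fintype] at hC
  have h0 := hC (fun i => W ↑i) ?_ ?_ ⟨x₀, hx₀C⟩
  · exact hWx₀ h0
  · rw [Finset.sum_coe_sort C W]
    exact hsum
  · rw [Finset.weightedVSub_eq_linear_combination Finset.univ
      (by rw [Finset.sum_coe_sort C W]; exact hsum)]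
    rw [Finset.sum_coe_sort C (fun x => W x • emb m n x)]
    exact hvec

end AuxLemmas

/-- If `T'` results from `T` by a flip supported on `X`, `σ ∈ T`, `σ ∉ T'`, and `G(σ)` is
connected, then `σ` contains a maximal simplex of `T_X^+`. -/
theorem flip_removed_simplex_contains_maximal {m n : ℕ}
    (A : Finset (Fin m × Fin n)) (T T' : Set (Finset (Fin m × Fin n)))
    (hT : IsTriangulation (emb m n) A T)
    (X : Finset (Fin m × Fin n)) (hXA : X ⊆ A) (hX : IsCircuit (emb m n) X)
    (w : Fin m × Fin n → ℝ)
    (hw0 : ∑ x ∈ X, w x • emb m n x = 0) (hw1 : ∑ x ∈ X, w x = 0)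
    (hw2 : ∀ x ∈ X, w x ≠ 0)
    (hflip : IsFlip T T' X w)
    (σ : Finset (Fin m × Fin n)) (hσT : σ ∈ T) (hσT' : σ ∉ T')
    (hconn : ((bip σ).induce {v | v ∈ (bip σ).support}).Connected) :
    ∃ τ : Finset (Fin m × Fin n), MaximalIn (Tpos X w) τ ∧ τ ⊆ σ := by
  classical
  obtain ⟨hTposT, L, hL, hT'eq⟩ := hflip
  rw [hT'eq] at hσT'
  have hnotadd : σ ∉ {τ | ∃ ρ ∈ L, ∃ s ∈ Tneg X w, τ = ρ ∪ s} :=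
    fun h => hσT' (Set.mem_union_right _ h)
  have hrem : σ ∈ {τ | ∃ ρ ∈ L, ∃ s ∈ Tpos X w, τ = ρ ∪ s} := by
    by_contra h
    exact hσT' (Set.mem_union_left _ ⟨hσT, h⟩)
  obtain ⟨ρ, hρL, σ₀, hσ₀, hσeq⟩ := hrem
  obtain ⟨hσ₀X, a, haX, hapos, haσ₀⟩ := hσ₀
  have hXneg : ∀ y ∈ X, w y < 0 → y ∈ σ₀ := by
    intro y hyX hyneg
    by_contra hy
    exact hnotadd ⟨ρ, hρL, σ₀, ⟨hσ₀X, y, hyX, hyneg, hy⟩, hσeq⟩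
  have hlink : ∀ x' ∈ X, 0 < w x' → ρ ∈ linkIn T (X.erase x') := by
    intro x' h1 h2
    rw [hL _ (maximalIn_tpos h1 h2)]
    exact hρL
  obtain ⟨x', hx'X, hx'pos, hx'ne⟩ := exists_second_pos hw0 hw2 haX hapos
  have haρ : a ∉ ρ := by
    intro haρ
    have hdisj := (hlink x' hx'X hx'pos).2.1
    have hmem : a ∈ X.erase x' ∩ ρ :=
      Finset.mem_inter.mpr ⟨Finset.mem_erase.mpr ⟨fun h => hx'ne h.symm, haX⟩, haρ⟩
    rw [hdisj] at hmem
    exact absurd hmem (Finset.notMem_empty a)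
  have haσ : a ∉ σ := by
    rw [hσeq, Finset.mem_union]
    rintro (h | h)
    · exact haρ h
    · exact haσ₀ h
  have hmain : X.erase a ⊆ σ := by
    intro e he
    obtain ⟨hea, heX⟩ := Finset.mem_erase.mp he
    by_contra heσ
    have heσ₀ : e ∉ σ₀ := fun h => heσ (by rw [hσeq]; exact Finset.mem_union_right _ h)
    rcases (hw2 e heX).lt_or_gt with heneg | hepos
    · exact heσ (by rw [hσeq]; exact Finset.mem_union_right _ (hXneg e heX heneg))
    obtain ⟨hρT, hdisj, hCT⟩ := hlink e heX hepos
    have hσC : σ ⊆ X.erase e ∪ ρ := by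
      rw [hσeq]
      intro t ht
      rcases Finset.mem_union.mp ht with h | h
      · exact Finset.mem_union_right _ h
      · exact Finset.mem_union_left _
          (Finset.mem_erase.mpr ⟨fun hte => heσ₀ (hte ▸ h), hσ₀X h⟩)
    have haC : a ∈ X.erase e ∪ ρ :=
      Finset.mem_union_left _ (Finset.mem_erase.mpr ⟨fun h => hea h.symm, haX⟩)
    have hacyc : (bip (X.erase e ∪ ρ)).IsAcyclic := bip_acyclic (hT.2 _ hCT)
    obtain ⟨⟨⟨b, hbX, hb1, hbneg⟩, -⟩, ⟨⟨c, hcX, hc2, hcneg⟩, -⟩⟩ := fiber_signs hw0 hw2 haX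
    have hbσ : b ∈ σ := by rw [hσeq]; exact Finset.mem_union_right _ (hXneg b hbX hbneg)
    have hcσ : c ∈ σ := by rw [hσeq]; exact Finset.mem_union_right _ (hXneg c hcX hcneg)
    have hadj_ub : (bip σ).Adj (Sum.inl a.1) (Sum.inr b.2) := by
      have h := bip_adj_of_mem hbσ
      rwa [hb1] at h
    have hadj_vc : (bip σ).Adj (Sum.inl c.1) (Sum.inr a.2) := by
      have h := bip_adj_of_mem hcσ
      rwa [hc2] at h
    have hu : Sum.inl a.1 ∈ (bip σ).support := ⟨_, hadj_ub⟩
    have hv : Sum.inr a.2 ∈ (bip σ).support := ⟨_, hadj_vc.symm⟩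
    have hreach : (bip σ).Reachable (Sum.inl a.1) (Sum.inr a.2) := by
      have h1 : ((bip σ).induce {x | x ∈ (bip σ).support}).Reachable ⟨_, hu⟩ ⟨_, hv⟩ :=
        hconn.preconnected _ _
      exact h1.map (⟨fun x => (x : Fin m ⊕ Fin n), fun {a b} h => h⟩ :
        (bip σ).induce {x | x ∈ (bip σ).support} →g bip σ)
    obtain ⟨p⟩ := hreach
    obtain ⟨P, hPp⟩ := p.toPath
    have hedges : ∀ e' ∈ P.edges, e' ∈ (bip (X.erase e ∪ ρ)).edgeSet := fun e' he' =>
      SimpleGraph.edgeSet_mono (bip_le hσC) (P.edges_subset_edgeSet he')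
    have hQp : (P.transfer _ hedges).IsPath := hPp.transfer hedges
    have hadjC : (bip (X.erase e ∪ ρ)).Adj (Sum.inl a.1) (Sum.inr a.2) := bip_adj_of_mem haC
    have hnotedge : s(Sum.inl a.1, Sum.inr a.2) ∉ (P.transfer _ hedges).reverse.edges := by
      intro hmem
      rw [SimpleGraph.Walk.edges_reverse, List.mem_reverse,
        SimpleGraph.Walk.edges_transfer] at hmem
      exact haσ (bip_mem_of_adj (P.adj_of_mem_edges hmem))
    have hcyc := SimpleGraph.Path.cons_isCycle
      ⟨(P.transfer _ hedges).reverse, hQp.reverse⟩ hadjC hnotedge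
    exact hacyc _ hcyc
  exact ⟨X.erase a, maximalIn_tpos haX hapos, hmain⟩
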